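/- Let θ_1 > θ_2 > … > θ_I > 0, N_1, …, N_I > 0, S > 0, let λ* be the CP water level with K^cp = #{i : θ_i > λ*}, and let p* be the optimal single price. Then the optimal CP revenue is at least the optimal SP revenue: ∑_{i=1}^{K^cp} N_i·(θ_i − √(θ_i·λ*)) ≥ p*·S, with equality if and only if K^cp = 1. -/

import Mathlib

lemma cp_aux_lam_sqrt (a lam : ℝ) (hlam : 0 < lam) :
    lam * Real.sqrt (a / lam) = Real.sqrt (a * lam) := by
  rw [show a * lam = lam ^ 2 * (a / lam) by field_simp,
    Real.sqrt_mul (sq_nonneg lam), Real.sqrt_sq hlam.le]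

lemma cp_aux_div_sqrt (a lam : ℝ) (ha : 0 < a) :
    a / Real.sqrt (a * lam) = Real.sqrt (a / lam) := by
  rw [show a / lam = a ^ 2 / (a * lam) by rw [pow_two, mul_div_mul_left _ _ ha.ne'],
    Real.sqrt_div (sq_nonneg a), Real.sqrt_sq ha.le]

lemma cp_key (a lam p : ℝ) (ha : 0 < a) (hlam : 0 < lam) (hp : 0 < p) :
    0 ≤ (if lam < a then a - Real.sqrt (a * lam) else 0)
        + lam * (max (a / p - 1) 0 - max (Real.sqrt (a / lam) - 1) 0)
        - p * max (a / p - 1) 0 ∧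
    ((if lam < a then a - Real.sqrt (a * lam) else 0)
        + lam * (max (a / p - 1) 0 - max (Real.sqrt (a / lam) - 1) 0)
        - p * max (a / p - 1) 0 = 0 → lam < a → p = Real.sqrt (a * lam)) := by
  set q := Real.sqrt (a * lam) with hqdef
  have hq0 : 0 ≤ q := Real.sqrt_nonneg _
  have hq2 : q ^ 2 = a * lam := Real.sq_sqrt (by positivity)
  by_cases hla : lam < a
  · have hs1 : 1 ≤ Real.sqrt (a / lam) := by
      rw [show (1:ℝ) = Real.sqrt 1 by simp]
      exact Real.sqrt_le_sqrt (by rw [le_div_iff₀ hlam]; linarith)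
    have hsmax : max (Real.sqrt (a / lam) - 1) 0 = Real.sqrt (a / lam) - 1 :=
      max_eq_left (by linarith)
    have hls : lam * (Real.sqrt (a / lam) - 1) = q - lam := by
      rw [mul_sub, cp_aux_lam_sqrt a lam hlam, mul_one]
    by_cases hpa : p < a
    · have htmax : max (a / p - 1) 0 = a / p - 1 := by
        apply max_eq_left
        rw [sub_nonneg, le_div_iff₀ hp]; linarith
      have key : p * ((if lam < a then a - q else 0)
          + lam * (max (a / p - 1) 0 - max (Real.sqrt (a / lam) - 1) 0)
          - p * max (a / p - 1) 0) = (p - q) ^ 2 := by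
        rw [if_pos hla, htmax, hsmax, mul_sub lam, hls]
        field_simp
        nlinarith [hq2]
      constructor
      · nlinarith [sq_nonneg (p - q)]
      · intro h0 _
        have h2 : (p - q) ^ 2 = 0 := by rw [← key, h0, mul_zero]
        have := pow_eq_zero_iff (n := 2) (by norm_num) |>.mp h2
        linarith
    · push_neg at hpa
      have htmax : max (a / p - 1) 0 = 0 := by
        apply max_eq_right
        rw [sub_nonpos, div_le_one hp]; linarith
      rw [if_pos hla, htmax, hsmax]
      have hsq : Real.sqrt a * Real.sqrt lam = q := (Real.sqrt_mul ha.le lam).symm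
      have hsal : Real.sqrt lam < Real.sqrt a := Real.sqrt_lt_sqrt hlam.le hla
      have hpos : 0 < a - q + lam * (0 - (Real.sqrt (a / lam) - 1)) - p * 0 := by
        have heq : a - q + lam * (0 - (Real.sqrt (a / lam) - 1)) - p * 0
            = (Real.sqrt a - Real.sqrt lam) ^ 2 := by
          rw [mul_sub lam, hls]
          nlinarith [Real.sq_sqrt ha.le, Real.sq_sqrt hlam.le, hsq]
        rw [heq]
        exact pow_pos (by linarith) 2
      exact ⟨hpos.le, fun h0 _ => by linarith⟩
  · push_neg at hla
    have hsmax : max (Real.sqrt (a / lam) - 1) 0 = 0 := by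
      apply max_eq_right
      rw [sub_nonpos]
      exact Real.sqrt_le_one.mpr (by rw [div_le_one hlam]; linarith)
    rw [if_neg (not_lt.mpr hla), hsmax]
    refine ⟨?_, fun _ h => absurd h (not_lt.mpr hla)⟩
    rcases le_or_gt a p with hap | hap
    · have htmax : max (a / p - 1) 0 = 0 := by
        apply max_eq_right
        rw [sub_nonpos, div_le_one hp]; linarith
      rw [htmax]; simp
    · have htmax : max (a / p - 1) 0 = a / p - 1 := by
        apply max_eq_left
        rw [sub_nonneg, le_div_iff₀ hp]; linarith
      rw [htmax]
      have h1 : 0 ≤ a / p - 1 := by rw [sub_nonneg, le_div_iff₀ hp]; linarith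
      nlinarith [mul_nonneg (by linarith : (0:ℝ) ≤ lam - p) h1]

lemma sp_mono {I : ℕ} {θ N : ℕ → ℝ} (hθpos : ∀ i < I, 0 < θ i) (hN : ∀ i < I, 0 < N i)
    {S p q : ℝ} (hS : 0 < S) (hp : 0 < p) (hpq : p < q)
    (hqs : ∑ i ∈ Finset.range I, N i * max (θ i / q - 1) 0 = S) :
    S < ∑ i ∈ Finset.range I, N i * max (θ i / p - 1) 0 := by
  have hq : 0 < q := hp.trans hpq
  -- exists i with positive term at q
  have hex : ∃ i ∈ Finset.range I, 0 < N i * max (θ i / q - 1) 0 := by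
    by_contra hcon
    push_neg at hcon
    have : ∑ i ∈ Finset.range I, N i * max (θ i / q - 1) 0 ≤ 0 :=
      Finset.sum_nonpos hcon
    linarith
  obtain ⟨i₀, hi₀mem, hi₀pos⟩ := hex
  rw [← hqs]
  apply Finset.sum_lt_sum
  · intro i hi
    have hiI := Finset.mem_range.mp hi
    apply mul_le_mul_of_nonneg_left _ (hN i hiI).le
    apply max_le_max _ le_rfl
    apply sub_le_sub_right
    exact div_le_div_of_nonneg_left (hθpos i hiI).le hp hpq.le
  · refine ⟨i₀, hi₀mem, ?_⟩
    have hiI := Finset.mem_range.mp hi₀mem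
    apply mul_lt_mul_of_pos_left _ (hN i₀ hiI)
    have hmaxpos : 0 < max (θ i₀ / q - 1) 0 := by
      rcases (mul_pos_iff.mp hi₀pos) with ⟨_, h⟩ | ⟨_, h⟩
      · exact h
      · exact absurd h (not_lt.mpr (le_max_right _ _))
    have hq1 : 0 < θ i₀ / q - 1 := by
      by_contra h
      push_neg at h
      rw [max_eq_right h] at hmaxpos
      exact lt_irrefl 0 hmaxpos
    have hlt : θ i₀ / q < θ i₀ / p :=
      div_lt_div_of_pos_left (hθpos i₀ hiI) hp hpq
    calc max (θ i₀ / q - 1) 0 = θ i₀ / q - 1 := max_eq_left hq1.le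
      _ < θ i₀ / p - 1 := by linarith
      _ ≤ max (θ i₀ / p - 1) 0 := le_max_left _ _

lemma sp_unique {I : ℕ} {θ N : ℕ → ℝ} (hθpos : ∀ i < I, 0 < θ i) (hN : ∀ i < I, 0 < N i)
    {S p q : ℝ} (hS : 0 < S) (hp : 0 < p) (hq : 0 < q)
    (hps : ∑ i ∈ Finset.range I, N i * max (θ i / p - 1) 0 = S)
    (hqs : ∑ i ∈ Finset.range I, N i * max (θ i / q - 1) 0 = S) : p = q := by
  rcases lt_trichotomy p q with h | h | h
  · have := sp_mono hθpos hN hS hp h hqs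
    rw [hps] at this; exact absurd this (lt_irrefl S)
  · exact h
  · have := sp_mono hθpos hN hS hq h hps
    rw [hqs] at this; exact absurd this (lt_irrefl S)

/-- The optimal CP revenue is at least the optimal SP revenue p*·S, with equality
iff the CP effective market has exactly one group. Groups are indexed 0, …, I−1. -/
theorem cp_revenue_ge_sp_revenue (I : ℕ) (hI : 1 ≤ I) (θ N : ℕ → ℝ)
    (hθpos : ∀ i < I, 0 < θ i)
    (hθanti : ∀ i j, i < j → j < I → θ j < θ i)
    (hN : ∀ i < I, 0 < N i)
    (S : ℝ) (hS : 0 < S)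
    (lam : ℝ) (hlam : 0 < lam)
    (hwfcp : ∑ i ∈ Finset.range I, N i * max (Real.sqrt (θ i / lam) - 1) 0 = S)
    (pstar : ℝ) (hpstar : 0 < pstar)
    (hwfsp : ∑ i ∈ Finset.range I, N i * max (θ i / pstar - 1) 0 = S) :
    (pstar * S ≤
      ∑ i ∈ (Finset.range I).filter (fun i => lam < θ i),
        N i * (θ i - Real.sqrt (θ i * lam))) ∧
    ((∑ i ∈ (Finset.range I).filter (fun i => lam < θ i),
        N i * (θ i - Real.sqrt (θ i * lam)) = pstar * S) ↔
      ((Finset.range I).filter (fun i => lam < θ i)).card = 1) := by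
  classical
  set F := (Finset.range I).filter (fun i => lam < θ i) with hF
  set R := ∑ i ∈ F, N i * (θ i - Real.sqrt (θ i * lam)) with hR
  set A : ℕ → ℝ := fun i =>
    (if lam < θ i then θ i - Real.sqrt (θ i * lam) else 0)
    + lam * (max (θ i / pstar - 1) 0 - max (Real.sqrt (θ i / lam) - 1) 0)
    - pstar * max (θ i / pstar - 1) 0 with hA
  -- the sum of N i * A i equals R - pstar * S
  have h2 : ∑ i ∈ Finset.range I,
      N i * (if lam < θ i then θ i - Real.sqrt (θ i * lam) else 0) = R := by
    rw [hR, hF, Finset.sum_filter]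
    exact Finset.sum_congr rfl fun i _ => by split <;> simp
  have hsumA : ∑ i ∈ Finset.range I, N i * A i = R - pstar * S := by
    calc ∑ i ∈ Finset.range I, N i * A i
        = ∑ i ∈ Finset.range I,
            ((N i * (if lam < θ i then θ i - Real.sqrt (θ i * lam) else 0)
              + lam * (N i * max (θ i / pstar - 1) 0))
              - lam * (N i * max (Real.sqrt (θ i / lam) - 1) 0)
              - pstar * (N i * max (θ i / pstar - 1) 0)) :=
          Finset.sum_congr rfl fun i _ => by rw [hA]; ring
      _ = ((∑ i ∈ Finset.range I,
              N i * (if lam < θ i then θ i - Real.sqrt (θ i * lam) else 0))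
            + lam * ∑ i ∈ Finset.range I, N i * max (θ i / pstar - 1) 0)
            - lam * ∑ i ∈ Finset.range I, N i * max (Real.sqrt (θ i / lam) - 1) 0
            - pstar * ∑ i ∈ Finset.range I, N i * max (θ i / pstar - 1) 0 := by
          rw [Finset.sum_sub_distrib, Finset.sum_sub_distrib, Finset.sum_add_distrib,
            Finset.mul_sum, Finset.mul_sum, Finset.mul_sum]
      _ = R - pstar * S := by rw [h2, hwfsp, hwfcp]; ring
  have hAnn : ∀ i ∈ Finset.range I, 0 ≤ N i * A i := by
    intro i hi
    have hiI := Finset.mem_range.mp hi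
    exact mul_nonneg (hN i hiI).le (cp_key (θ i) lam pstar (hθpos i hiI) hlam hpstar).1
  have hineq : pstar * S ≤ R := by
    have h0 := Finset.sum_nonneg hAnn
    rw [hsumA] at h0; linarith
  -- θ is injective on range I
  have hinj : ∀ i j, i < I → j < I → θ i = θ j → i = j := by
    intro i j hi hj he
    rcases lt_trichotomy i j with h | h | h
    · exact absurd he (ne_of_gt (hθanti i j h hj))
    · exact h
    · exact absurd he (ne_of_lt (hθanti j i h hi))
  -- 0 is always in F
  have h0F : 0 ∈ F := by
    rw [hF, Finset.mem_filter]
    refine ⟨Finset.mem_range.mpr hI, ?_⟩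
    by_contra hcon
    push_neg at hcon
    have hzero : ∑ i ∈ Finset.range I, N i * max (Real.sqrt (θ i / lam) - 1) 0 = 0 := by
      apply Finset.sum_eq_zero
      intro i hi
      have hiI := Finset.mem_range.mp hi
      have hle : θ i ≤ lam := by
        rcases Nat.eq_zero_or_pos i with h0 | h0
        · rw [h0]; exact hcon
        · exact le_of_lt ((hθanti 0 i h0 hiI).trans_le hcon)
      have : max (Real.sqrt (θ i / lam) - 1) 0 = 0 :=
        max_eq_right (sub_nonpos.mpr (Real.sqrt_le_one.mpr ((div_le_one hlam).mpr hle)))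
      rw [this, mul_zero]
    rw [hzero] at hwfcp; linarith
  refine ⟨hineq, ?_, ?_⟩
  · -- equality implies card = 1
    intro heq
    have hsum0 : ∑ i ∈ Finset.range I, N i * A i = 0 := by rw [hsumA, heq]; ring
    have hall := (Finset.sum_eq_zero_iff_of_nonneg hAnn).mp hsum0
    have hA0 : ∀ i ∈ F, pstar = Real.sqrt (θ i * lam) := by
      intro i hiF
      rw [hF, Finset.mem_filter] at hiF
      obtain ⟨hir, hilt⟩ := hiF
      have hiI := Finset.mem_range.mp hir
      have hNA := hall i hir
      have hAi : A i = 0 := by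
        rcases mul_eq_zero.mp hNA with h | h
        · exact absurd h (hN i hiI).ne'
        · exact h
      exact (cp_key (θ i) lam pstar (hθpos i hiI) hlam hpstar).2 hAi hilt
    apply Finset.card_eq_one.mpr
    refine ⟨0, Finset.eq_singleton_iff_unique_mem.mpr ⟨h0F, ?_⟩⟩
    intro j hjF
    have hj := hA0 j hjF
    have h0 := hA0 0 h0F
    have hjI := Finset.mem_range.mp (Finset.mem_filter.mp hjF).1
    have hθj : θ j * lam = θ 0 * lam := by
      have : Real.sqrt (θ j * lam) = Real.sqrt (θ 0 * lam) := by rw [← hj, ← h0]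
      have hj2 := Real.sq_sqrt (mul_nonneg (hθpos j hjI).le hlam.le)
      have h02 := Real.sq_sqrt (mul_nonneg (hθpos 0 hI).le hlam.le)
      rw [← hj2, ← h02, this]
    exact hinj j 0 hjI hI (mul_right_cancel₀ hlam.ne' hθj)
  · -- card = 1 implies equality
    intro hcard
    obtain ⟨i₀, hFs⟩ := Finset.card_eq_one.mp hcard
    have hi₀F : i₀ ∈ F := by rw [hFs]; exact Finset.mem_singleton_self i₀
    rw [hF, Finset.mem_filter] at hi₀F
    have hi₀I := Finset.mem_range.mp hi₀F.1
    have hi₀lt : lam < θ i₀ := hi₀F.2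
    have hθi₀ := hθpos i₀ hi₀I
    have hothers : ∀ j < I, j ≠ i₀ → θ j ≤ lam := by
      intro j hjI hne
      by_contra hcon
      push_neg at hcon
      have : j ∈ F := by rw [hF, Finset.mem_filter]; exact ⟨Finset.mem_range.mpr hjI, hcon⟩
      rw [hFs, Finset.mem_singleton] at this
      exact hne this
    have hs1 : 1 ≤ Real.sqrt (θ i₀ / lam) := by
      rw [show (1:ℝ) = Real.sqrt 1 by simp]
      exact Real.sqrt_le_sqrt (by rw [le_div_iff₀ hlam]; linarith)
    -- S equals the single cp term
    have hScp : N i₀ * max (Real.sqrt (θ i₀ / lam) - 1) 0 = S := by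
      rw [← hwfcp]
      symm
      apply Finset.sum_eq_single_of_mem i₀ (Finset.mem_range.mpr hi₀I)
      intro j hj hne
      have hjI := Finset.mem_range.mp hj
      have hle := hothers j hjI hne
      rw [max_eq_right (sub_nonpos.mpr (Real.sqrt_le_one.mpr ((div_le_one hlam).mpr hle))),
        mul_zero]
    set p' := Real.sqrt (θ i₀ * lam) with hp'def
    have hp'pos : 0 < p' := Real.sqrt_pos.mpr (by positivity)
    have hdiv : θ i₀ / p' = Real.sqrt (θ i₀ / lam) := cp_aux_div_sqrt (θ i₀) lam hθi₀
    have hlamle : lam ≤ p' := by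
      have h1 : Real.sqrt (lam * lam) ≤ Real.sqrt (θ i₀ * lam) :=
        Real.sqrt_le_sqrt (by nlinarith)
      rwa [Real.sqrt_mul_self hlam.le] at h1
    -- p' satisfies the SP water-filling equation
    have hwf' : ∑ i ∈ Finset.range I, N i * max (θ i / p' - 1) 0 = S := by
      rw [Finset.sum_eq_single_of_mem i₀ (Finset.mem_range.mpr hi₀I)]
      · rw [hdiv]; exact hScp
      · intro j hj hne
        have hjI := Finset.mem_range.mp hj
        have hle := (hothers j hjI hne).trans hlamle
        rw [max_eq_right (sub_nonpos.mpr ((div_le_one hp'pos).mpr hle)), mul_zero]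
    have hpp' : pstar = p' := sp_unique hθpos hN hS hpstar hp'pos hwfsp hwf'
    -- now compute both sides
    have hkey : p' * (θ i₀ / p' - 1) = θ i₀ - p' := by
      field_simp
    rw [hR, hFs, Finset.sum_singleton, hpp', ← hScp,
      max_eq_left (by linarith : (0:ℝ) ≤ Real.sqrt (θ i₀ / lam) - 1), ← hdiv,
      show p' * (N i₀ * (θ i₀ / p' - 1)) = N i₀ * (p' * (θ i₀ / p' - 1)) by ring, hkey]
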